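/- Let C be an additive category, F an additive endofunctor of C, and M a nonzero object of C. Assume: (i) for each i ≥ 0, every nonzero morphism F^i(M) → M is an epimorphism; (ii) for all i, j ≥ 0, if g : F^i(M) → M is an epimorphism, then F^j(g) : F^{i+j}(M) → F^j(M) is an epimorphism. Then for all i, j ≥ 0, every nonzero morphism f : F^i(M) → M and every nonzero morphism g : F^j(M) → M, the composite f ∘ F^i(g) : F^{i+j}(M) → M is nonzero. (This is the statement that the orbital ring O(F,M) is a domain.) -/
import Mathlib


open CategoryTheory

/-- The `d`-fold iterate of an endofunctor, with `funcIter F 0` the identity functor. -/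
def funcIter {C : Type*} [Category C] (F : C ⥤ C) : ℕ → C ⥤ C
  | 0 => 𝟭 C
  | n + 1 => funcIter F n ⋙ F

/-- If every nonzero morphism `F^i(M) ⟶ M` is an epimorphism, and iterates of `F`
preserve these epimorphisms, then the composite `f ∘ F^i(g)` of nonzero morphisms
`f : F^i(M) ⟶ M` and `g : F^j(M) ⟶ M` is nonzero; i.e. the orbital ring `O(F,M)`
is a domain. -/
theorem stmt_2 {C : Type*} [Category C] [Preadditive C] [Limits.HasFiniteBiproducts C]
    (F : C ⥤ C) [F.Additive] (M : C) (hM : ¬ Limits.IsZero M)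
    (h1 : ∀ (i : ℕ) (f : (funcIter F i).obj M ⟶ M), f ≠ 0 → Epi f)
    (h2 : ∀ (i j : ℕ) (g : (funcIter F i).obj M ⟶ M),
      Epi g → Epi ((funcIter F j).map g)) :
    ∀ (i j : ℕ) (f : (funcIter F i).obj M ⟶ M) (g : (funcIter F j).obj M ⟶ M),
      f ≠ 0 → g ≠ 0 → (funcIter F i).map g ≫ f ≠ 0 := by
  intro i j f g hf hg h0
  have hEg : Epi ((funcIter F i).map g) := h2 j i g (h1 j g hg)
  apply hf
  rw [← cancel_epi ((funcIter F i).map g), h0, Limits.comp_zero]
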